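/- Let A : Sym(n) → ℝᵐ and b ∈ ℝᵐ, and C := {X ∈ S₊ⁿ : A(X) = b} contain a positive definite matrix. Suppose for some k ∈ [n−1] there exists a linearly independent set {h₀, h₁, …, h_k} ⊆ ℝⁿ with (h₀ h_iᵀ + h_i h₀ᵀ)/2 ∈ ker(A) for each i ∈ [k]. Then every vertex of C has rank at most n − k. -/

import Mathlib

open Matrix

/-- The normal cone, within the space of symmetric matrices (with the trace inner
product), of a set `C` of symmetric matrices at a point `X`. -/
def normalConeM {ι : Type*} [Fintype ι] (C : Set (Matrix ι ι ℝ)) (X : Matrix ι ι ℝ) :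
    Set (Matrix ι ι ℝ) :=
  {c | c.IsSymm ∧ ∀ Y ∈ C, (c * Y).trace ≤ (c * X).trace}

/-- A point of a convex set of symmetric matrices is a vertex if its normal cone is
full-dimensional in the space `Sym(ι)` of symmetric matrices, whose dimension is
`card ι * (card ι + 1) / 2`. -/
def IsVertex {ι : Type*} [Fintype ι] (C : Set (Matrix ι ι ℝ)) (X : Matrix ι ι ℝ) : Prop :=
  X ∈ C ∧ Module.finrank ℝ (Submodule.span ℝ (normalConeM C X))
      = Fintype.card ι * (Fintype.card ι + 1) / 2


noncomputable def symSub (n : ℕ) : Submodule ℝ (Matrix (Fin n) (Fin n) ℝ) where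
  carrier := {c | c.IsSymm}
  add_mem' := fun ha hb => ha.add hb
  zero_mem' := Matrix.isSymm_zero
  smul_mem' := fun r _ hc => hc.smul r

noncomputable def toSym2 (n : ℕ) : Matrix (Fin n) (Fin n) ℝ →ₗ[ℝ] (Sym2 (Fin n) → ℝ) where
  toFun M := fun s => M (Quot.out s).1 (Quot.out s).2
  map_add' := by intros; rfl
  map_smul' := by intros; rfl

lemma finrank_symSub_le (n : ℕ) :
    Module.finrank ℝ (symSub n) ≤ n * (n + 1) / 2 := by
  have hinj : Function.Injective ((toSym2 n).comp (symSub n).subtype) := by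
    rw [← LinearMap.ker_eq_bot, LinearMap.ker_eq_bot']
    intro ⟨M, hM⟩ hM0
    ext : 1
    ext i j
    have := congrFun hM0 (Sym2.mk i j)
    simp only [LinearMap.comp_apply, Submodule.subtype_apply, toSym2, LinearMap.coe_mk,
      AddHom.coe_mk] at this
    change M (Quot.out (Sym2.mk i j)).1 (Quot.out (Sym2.mk i j)).2 = 0 at this
    have hout : Sym2.mk (Quot.out (Sym2.mk i j)).1 (Quot.out (Sym2.mk i j)).2 = Sym2.mk i j := Quot.out_eq _
    rcases (Sym2.mk_eq_mk_iff (p := Quot.out (Sym2.mk i j)) (q := (i, j))).1 hout with h | h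
    · rw [h] at this; simpa using this
    · rw [show (Quot.out (Sym2.mk i j)) = ((i,j) : (Fin n) × (Fin n)).swap from h] at this
      have hs : M j i = M i j := by
        have := congrFun (congrFun hM i) j
        simpa [Matrix.IsSymm, Matrix.transpose] using congrFun (congrFun hM.symm j) i
      simpa [hs] using this
  have := LinearMap.finrank_le_finrank_of_injective hinj
  calc Module.finrank ℝ (symSub n) ≤ Module.finrank ℝ (Sym2 (Fin n) → ℝ) := this
    _ = Fintype.card (Sym2 (Fin n)) := Module.finrank_pi ℝ
    _ = n * (n+1) / 2 := by
        rw [Sym2.card, Fintype.card_fin, Nat.choose_two_right]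
        simp [Nat.mul_comm]


lemma dot_mulVec_comm {n : ℕ} {M : Matrix (Fin n) (Fin n) ℝ} (hM : M.IsHermitian)
    (u v : Fin n → ℝ) : u ⬝ᵥ M *ᵥ v = v ⬝ᵥ M *ᵥ u := by
  have hs : Mᵀ = M := by rw [← conjTranspose_eq_transpose_of_trivial]; exact hM
  rw [dotProduct_mulVec, ← mulVec_transpose, hs, dotProduct_comm]

lemma psd_cs {n : ℕ} {M : Matrix (Fin n) (Fin n) ℝ} (hM : M.PosSemidef) (u v : Fin n → ℝ) :
    (u ⬝ᵥ M *ᵥ v) ^ 2 ≤ (u ⬝ᵥ M *ᵥ u) * (v ⬝ᵥ M *ᵥ v) := by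
  have key : ∀ t : ℝ, 0 ≤ (v ⬝ᵥ M *ᵥ v) * (t * t) + (2 * (u ⬝ᵥ M *ᵥ v)) * t + (u ⬝ᵥ M *ᵥ u) := by
    intro t
    have h0 := hM.dotProduct_mulVec_nonneg (u + t • v)
    simp only [star_trivial, mulVec_add, mulVec_smul, dotProduct_add, add_dotProduct,
      smul_dotProduct, dotProduct_smul, smul_eq_mul] at h0
    have hc := dot_mulVec_comm hM.1 u v
    have he : (v ⬝ᵥ M *ᵥ v) * (t * t) + (2 * (u ⬝ᵥ M *ᵥ v)) * t + (u ⬝ᵥ M *ᵥ u)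
        = u ⬝ᵥ M *ᵥ u + t * (v ⬝ᵥ M *ᵥ u) + t * (u ⬝ᵥ M *ᵥ v + t * (v ⬝ᵥ M *ᵥ v)) := by
      rw [hc]; ring
    rw [he]; exact h0
  have hd := discrim_le_zero key
  rw [discrim] at hd
  nlinarith [hd]


noncomputable section AuxVRB

lemma real_herm_iff {n : ℕ} (M : Matrix (Fin n) (Fin n) ℝ) : M.IsHermitian ↔ M.IsSymm := by
  rw [Matrix.IsHermitian, conjTranspose_eq_transpose_of_trivial, Matrix.IsSymm]

/-- the symmetrized rank-one-ish operator -/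
def symOp {n : ℕ} (h0 : Fin n → ℝ) : (Fin n → ℝ) →ₗ[ℝ] Matrix (Fin n) (Fin n) ℝ where
  toFun w := (1 / 2 : ℝ) • (Matrix.vecMulVec h0 w + Matrix.vecMulVec w h0)
  map_add' x y := by
    ext i j
    simp [Matrix.vecMulVec_apply, Matrix.add_apply, Matrix.smul_apply]
    ring
  map_smul' r x := by
    ext i j
    simp [Matrix.vecMulVec_apply, Matrix.add_apply, Matrix.smul_apply]
    ring

lemma symOp_isSymm {n : ℕ} (h0 w : Fin n → ℝ) : (symOp h0 w).IsSymm := by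
  apply Matrix.IsSymm.ext
  intro i j
  simp [symOp, Matrix.vecMulVec_apply, Matrix.smul_apply, Matrix.add_apply]
  ring

lemma vecMulVec_mulVec' {n : ℕ} (x y v : Fin n → ℝ) :
    Matrix.vecMulVec x y *ᵥ v = (y ⬝ᵥ v) • x := by
  ext i
  simp [Matrix.vecMulVec_apply, Matrix.mulVec, dotProduct, Finset.mul_sum]
  rw [Finset.sum_mul]
  exact Finset.sum_congr rfl fun j _ => by ring

lemma dot_symOp {n : ℕ} (h0 w v : Fin n → ℝ) :
    v ⬝ᵥ (symOp h0 w) *ᵥ v = (h0 ⬝ᵥ v) * (w ⬝ᵥ v) := by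
  simp only [symOp, LinearMap.coe_mk, AddHom.coe_mk, Matrix.smul_mulVec,
    Matrix.add_mulVec, vecMulVec_mulVec', dotProduct_smul, dotProduct_add,
    smul_eq_mul]
  rw [dotProduct_comm v h0, dotProduct_comm v w]
  ring

lemma trace_sq_pos {n : ℕ} {D : Matrix (Fin n) (Fin n) ℝ} (hs : D.IsSymm) (hne : D ≠ 0) :
    0 < (D * D).trace := by
  have htr : (D * D).trace = ∑ i, ∑ j, (D i j) ^ 2 := by
    simp only [Matrix.trace, Matrix.diag, Matrix.mul_apply]
    exact Finset.sum_congr rfl fun i _ => Finset.sum_congr rfl fun j _ => by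
      rw [hs.apply i j]; ring
  rw [htr]
  obtain ⟨i0, j0, hij⟩ : ∃ i j, D i j ≠ 0 := by
    by_contra hcon
    push_neg at hcon
    exact hne (by ext i j; simp [hcon])
  refine Finset.sum_pos' (fun i _ => Finset.sum_nonneg fun j _ => sq_nonneg _)
    ⟨i0, Finset.mem_univ _, Finset.sum_pos' (fun j _ => sq_nonneg _)
      ⟨j0, Finset.mem_univ _, by positivity⟩⟩

lemma core_ineq {a bb p q c1 c2 μ t : ℝ} (ha : 0 ≤ a) (hb : 0 ≤ bb) (hc1 : 0 ≤ c1)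
    (hc2 : 0 ≤ c2) (hp : p ^ 2 ≤ c1 * a) (hq : q ^ 2 ≤ c2 * bb) (hμ : μ = c1 * c2 / 2)
    (ht : μ * t ^ 2 ≤ 1 / 2) :
    0 ≤ (1 - μ * t ^ 2) * a + t * (q * p) + μ * t ^ 2 * bb := by
  have hμ0 : 0 ≤ μ := by rw [hμ]; positivity
  have h1 : (t * (q * p)) ^ 2 ≤ 2 * μ * t ^ 2 * (a * bb) := by
    have hpq : p ^ 2 * q ^ 2 ≤ (c1 * a) * (c2 * bb) :=
      mul_le_mul hp hq (sq_nonneg q) (mul_nonneg hc1 ha)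
    have h := mul_le_mul_of_nonneg_left hpq (sq_nonneg t)
    subst hμ
    nlinarith [h]
  have h2 : (t * (q * p)) ^ 2 ≤ ((1 - μ * t ^ 2) * a + μ * t ^ 2 * bb) ^ 2 := by
    nlinarith [h1, mul_nonneg ha hb, mul_nonneg hμ0 (sq_nonneg t),
      sq_nonneg ((1 - μ * t ^ 2) * a - μ * t ^ 2 * bb)]
  have hA : 0 ≤ (1 - μ * t ^ 2) * a := mul_nonneg (by linarith) ha
  have hB : 0 ≤ μ * t ^ 2 * bb := mul_nonneg (mul_nonneg hμ0 (sq_nonneg t)) hb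
  nlinarith [h2, hA, hB]

end AuxVRB

lemma trace_comb {n : ℕ} (c X D Xh : Matrix (Fin n) (Fin n) ℝ) (α t s : ℝ) :
    (c * (α • X + t • D + s • Xh)).trace
      = α * (c * X).trace + t * (c * D).trace + s * (c * Xh).trace := by
  rw [Matrix.mul_add, Matrix.mul_add, Matrix.trace_add, Matrix.trace_add,
    Matrix.mul_smul, Matrix.mul_smul, Matrix.mul_smul, Matrix.trace_smul,
    Matrix.trace_smul, Matrix.trace_smul]
  simp [smul_eq_mul]

set_option maxHeartbeats 1000000 in
theorem vertex_rank_bound {n m k : ℕ} (hk : 1 ≤ k) (hkn : k ≤ n - 1)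
    (A : Fin m → Matrix (Fin n) (Fin n) ℝ) (hA : ∀ i, (A i).IsSymm)
    (b : Fin m → ℝ) (C : Set (Matrix (Fin n) (Fin n) ℝ))
    (hC : C = {X | X.PosSemidef ∧ ∀ i, (A i * X).trace = b i})
    (hSlater : ∃ X ∈ C, X.PosDef)
    (h0 : Fin n → ℝ) (h : Fin k → Fin n → ℝ)
    (hli : LinearIndependent ℝ (Fin.cons h0 h : Fin (k + 1) → Fin n → ℝ))
    (hker : ∀ i : Fin k, ∀ j : Fin m,
      (A j * ((1 / 2 : ℝ) • (Matrix.vecMulVec h0 (h i) + Matrix.vecMulVec (h i) h0))).trace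
        = 0) :
    ∀ X, IsVertex C X → X.rank ≤ n - k := by
  intro X hX
  by_contra hrank
  push_neg at hrank
  have hXC : X.PosSemidef ∧ ∀ i, (A i * X).trace = b i := by
    have := hX.1; rwa [hC] at this
  obtain ⟨Xh, hXhC, hXhPD⟩ := hSlater
  rw [hC] at hXhC
  have hXpsd : X.PosSemidef := hXC.1
  obtain ⟨hli_h, hli_h0⟩ := linearIndependent_fin_cons.mp hli
  -- find w in range X ∩ span h
  set U : Submodule ℝ (Fin n → ℝ) := LinearMap.range X.mulVecLin with hUdef
  set W : Submodule ℝ (Fin n → ℝ) := Submodule.span ℝ (Set.range h) with hWdef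
  have hUrank : Module.finrank ℝ U = X.rank := rfl
  have hWrank : Module.finrank ℝ W = k := by
    rw [hWdef, finrank_span_eq_card hli_h, Fintype.card_fin]
  have hsup : Module.finrank ℝ (U ⊔ W : Submodule ℝ (Fin n → ℝ)) ≤ n := by
    have := Submodule.finrank_le (U ⊔ W : Submodule ℝ (Fin n → ℝ))
    rwa [Module.finrank_pi, Fintype.card_fin] at this
  have hinf : 0 < Module.finrank ℝ (U ⊓ W : Submodule ℝ (Fin n → ℝ)) := by
    have hq := Submodule.finrank_sup_add_finrank_inf_eq U W
    rw [hUrank, hWrank] at hq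
    omega
  obtain ⟨w, hwUW, hwne⟩ : ∃ w, w ∈ U ⊓ W ∧ w ≠ 0 := by
    haveI := Module.finrank_pos_iff.mp hinf
    obtain ⟨⟨x, hx⟩, hxne⟩ := exists_ne (0 : ↥(U ⊓ W))
    exact ⟨x, hx, fun hc => hxne (Subtype.ext hc)⟩
  obtain ⟨u, hu⟩ : ∃ u, X *ᵥ u = w := by
    obtain ⟨u, hu⟩ := hwUW.1
    exact ⟨u, by simpa [Matrix.mulVecLin_apply] using hu⟩
  obtain ⟨cf, hcf⟩ : ∃ cf : Fin k → ℝ, ∑ i, cf i • h i = w :=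
    (Submodule.mem_span_range_iff_exists_fun ℝ).mp hwUW.2
  -- the direction D
  set D : Matrix (Fin n) (Fin n) ℝ := symOp h0 w with hDdef
  have hDsymm : D.IsSymm := symOp_isSymm h0 w
  have hDne : D ≠ 0 := by
    intro hc
    apply hli.ne_zero 0
    have hfun : ∀ i j, h0 i * w j + w i * h0 j = 0 := by
      intro i j
      have h1 := congrFun (congrFun hc i) j
      simp only [hDdef, symOp, LinearMap.coe_mk, AddHom.coe_mk, Matrix.smul_apply,
        Matrix.add_apply, Matrix.vecMulVec_apply, smul_eq_mul, Matrix.zero_apply] at h1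
      linarith [h1]
    obtain ⟨i0, hi0⟩ : ∃ i0, w i0 ≠ 0 := by
      by_contra hcon; push_neg at hcon; exact hwne (funext hcon)
    have hd : h0 i0 = 0 := by
      have h1 := hfun i0 i0
      have h2 : h0 i0 * w i0 = 0 := by linarith
      rcases mul_eq_zero.mp h2 with hh | hh
      · exact hh
      · exact absurd hh hi0
    have hall : ∀ j, h0 j = 0 := by
      intro j
      have h1 := hfun i0 j
      rw [hd] at h1
      have h2 : w i0 * h0 j = 0 := by linarith
      rcases mul_eq_zero.mp h2 with hh | hh
      · exact absurd hh hi0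
      · exact hh
    simp only [Fin.cons_zero]
    exact funext hall
  have hAD : ∀ j, (A j * D).trace = 0 := by
    intro j
    have hDsum : D = ∑ i, cf i • symOp h0 (h i) := by
      rw [hDdef, ← hcf, map_sum]
      exact Finset.sum_congr rfl fun i _ => _root_.map_smul _ _ _
    rw [hDsum, Matrix.mul_sum, Matrix.trace_sum]
    refine Finset.sum_eq_zero fun i _ => ?_
    rw [Matrix.mul_smul, Matrix.trace_smul,
      show (A j * symOp h0 (h i)).trace = 0 from hker i j, smul_zero]
  -- Cauchy–Schwarz constants
  obtain ⟨c1, hc1def⟩ : ∃ c1 : ℝ, c1 = u ⬝ᵥ X *ᵥ u := ⟨_, rfl⟩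
  have hc1 : 0 ≤ c1 := by rw [hc1def]; simpa using hXpsd.dotProduct_mulVec_nonneg u
  have hp : ∀ v, (w ⬝ᵥ v) ^ 2 ≤ c1 * (v ⬝ᵥ X *ᵥ v) := by
    intro v
    have h1 : w ⬝ᵥ v = u ⬝ᵥ X *ᵥ v := by
      rw [← hu, dotProduct_comm, dot_mulVec_comm hXpsd.1 v u]
    rw [h1, hc1def]
    exact psd_cs hXpsd u v
  have hdet : IsUnit Xh.det := (Matrix.isUnit_iff_isUnit_det Xh).mp hXhPD.isUnit
  obtain ⟨u', hu'⟩ : ∃ u', Xh *ᵥ u' = h0 :=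
    ⟨Xh⁻¹ *ᵥ h0, by rw [Matrix.mulVec_mulVec, Matrix.mul_nonsing_inv _ hdet, Matrix.one_mulVec]⟩
  obtain ⟨c2, hc2def⟩ : ∃ c2 : ℝ, c2 = u' ⬝ᵥ Xh *ᵥ u' := ⟨_, rfl⟩
  have hc2 : 0 ≤ c2 := by rw [hc2def]; simpa using hXhPD.posSemidef.dotProduct_mulVec_nonneg u'
  have hq : ∀ v, (h0 ⬝ᵥ v) ^ 2 ≤ c2 * (v ⬝ᵥ Xh *ᵥ v) := by
    intro v
    have h1 : h0 ⬝ᵥ v = u' ⬝ᵥ Xh *ᵥ v := by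
      rw [← hu', dotProduct_comm, dot_mulVec_comm hXhPD.posSemidef.1 v u']
    rw [h1, hc2def]
    exact psd_cs hXhPD.posSemidef u' v
  obtain ⟨μ, hμdef⟩ : ∃ μ : ℝ, μ = c1 * c2 / 2 := ⟨_, rfl⟩
  have hμ0 : 0 ≤ μ := by rw [hμdef]; positivity
  -- feasibility of two-sided perturbations
  have hYC : ∀ t : ℝ, μ * t ^ 2 ≤ 1 / 2 →
      ((1 - μ * t ^ 2) • X + t • D + (μ * t ^ 2) • Xh) ∈ C := by
    intro t ht
    rw [hC]
    refine ⟨Matrix.PosSemidef.of_dotProduct_mulVec_nonneg ?_ ?_, ?_⟩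
    · rw [real_herm_iff]
      exact ((((real_herm_iff X).mp hXpsd.1).smul _).add (hDsymm.smul _)).add
        (((real_herm_iff Xh).mp hXhPD.posSemidef.1).smul _)
    · intro v
      have hform : v ⬝ᵥ ((1 - μ * t ^ 2) • X + t • D + (μ * t ^ 2) • Xh) *ᵥ v
          = (1 - μ * t ^ 2) * (v ⬝ᵥ X *ᵥ v) + t * ((h0 ⬝ᵥ v) * (w ⬝ᵥ v))
            + (μ * t ^ 2) * (v ⬝ᵥ Xh *ᵥ v) := by
        rw [Matrix.add_mulVec, Matrix.add_mulVec, Matrix.smul_mulVec,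
          Matrix.smul_mulVec, Matrix.smul_mulVec, dotProduct_add,
          dotProduct_add, dotProduct_smul, dotProduct_smul,
          dotProduct_smul, smul_eq_mul, smul_eq_mul, smul_eq_mul, hDdef, dot_symOp]
      simp only [star_trivial]
      rw [hform]
      exact core_ineq (by simpa using hXpsd.dotProduct_mulVec_nonneg v) (by simpa using hXhPD.posSemidef.dotProduct_mulVec_nonneg v)
        hc1 hc2 (hp v) (hq v) hμdef ht
    · intro j
      rw [trace_comb, hXC.2 j, hAD j, hXhC.2 j]
      ring
  -- normal cone is orthogonal to D
  have hortho : ∀ c ∈ normalConeM C X, (c * D).trace = 0 := by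
    intro c hc
    obtain ⟨L, hLdef⟩ : ∃ L : ℝ, L = (c * D).trace := ⟨_, rfl⟩
    obtain ⟨K, hKdef⟩ : ∃ K : ℝ, K = (c * X).trace - (c * Xh).trace := ⟨_, rfl⟩
    suffices hL0 : L = 0 by rw [← hLdef]; exact hL0
    have hineq : ∀ t : ℝ, μ * t ^ 2 ≤ 1 / 2 → t * L ≤ μ * t ^ 2 * K := by
      intro t ht
      have hle := hc.2 _ (hYC t ht)
      rw [trace_comb] at hle
      rw [hLdef, hKdef]
      nlinarith [hle]
    by_contra hL
    have hLpos : 0 < |L| := abs_pos.mpr hL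
    obtain ⟨M0, hM0def⟩ : ∃ M0 : ℝ, M0 = μ * |K| := ⟨_, rfl⟩
    have hM0 : 0 ≤ M0 := by rw [hM0def]; positivity
    obtain ⟨t0, ht0def⟩ : ∃ t0 : ℝ, t0 = min (|L| / (2 * (M0 + 1))) (1 / (2 * (μ + 1))) :=
      ⟨_, rfl⟩
    have ht0pos : 0 < t0 := by rw [ht0def]; exact lt_min (by positivity) (by positivity)
    have hsmall : μ * t0 ^ 2 ≤ 1 / 2 := by
      have h1 : t0 ≤ 1 / (2 * (μ + 1)) := ht0def ▸ min_le_right _ _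
      have h2 : t0 ^ 2 ≤ (1 / (2 * (μ + 1))) ^ 2 := pow_le_pow_left₀ ht0pos.le h1 2
      have h3 : μ * t0 ^ 2 ≤ μ * (1 / (2 * (μ + 1))) ^ 2 :=
        mul_le_mul_of_nonneg_left h2 hμ0
      have h4 : μ * (1 / (2 * (μ + 1))) ^ 2 ≤ 1 / 2 := by
        rw [div_pow, one_pow, mul_one_div, div_le_div_iff₀ (by positivity) (by norm_num)]
        nlinarith [sq_nonneg μ]
      linarith
    have h1 := hineq t0 hsmall
    have h2 := hineq (-t0) (by rw [neg_pow]; simpa using hsmall)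
    have habs : |L| ≤ M0 * t0 := by
      have hKle : K ≤ |K| := le_abs_self K
      have hmul : μ * t0 ^ 2 * K ≤ μ * t0 ^ 2 * |K| :=
        mul_le_mul_of_nonneg_left hKle (mul_nonneg hμ0 (sq_nonneg t0))
      rcases abs_cases L with ⟨hh, _⟩ | ⟨hh, _⟩
      · rw [hh, hM0def]; nlinarith [h1, hmul, ht0pos]
      · rw [hh, hM0def]; nlinarith [h2, hmul, ht0pos]
    have ht0le : t0 ≤ |L| / (2 * (M0 + 1)) := ht0def ▸ min_le_left _ _
    have hfin : M0 * t0 ≤ M0 * (|L| / (2 * (M0 + 1))) :=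
      mul_le_mul_of_nonneg_left ht0le hM0
    have hlt : M0 * (|L| / (2 * (M0 + 1))) < |L| := by
      rw [mul_div_assoc', div_lt_iff₀ (by positivity)]
      nlinarith [hLpos, hM0]
    linarith
  -- final dimension count
  have hspan : Submodule.span ℝ (normalConeM C X) ≤ symSub n ⊓ LinearMap.ker
      ((Matrix.traceLinearMap (Fin n) ℝ ℝ).comp (LinearMap.mulRight ℝ D)) := by
    rw [Submodule.span_le]
    intro c hcN
    refine ⟨hcN.1, ?_⟩
    simp only [SetLike.mem_coe, LinearMap.mem_ker, LinearMap.comp_apply,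
      LinearMap.mulRight_apply, Matrix.traceLinearMap_apply]
    exact hortho c hcN
  have hDnot : D ∉ (symSub n ⊓ LinearMap.ker
      ((Matrix.traceLinearMap (Fin n) ℝ ℝ).comp (LinearMap.mulRight ℝ D))) := by
    intro hcon
    have h1 := (Submodule.mem_inf.mp hcon).2
    simp only [LinearMap.mem_ker, LinearMap.comp_apply, LinearMap.mulRight_apply,
      Matrix.traceLinearMap_apply] at h1
    exact absurd h1 (ne_of_gt (trace_sq_pos hDsymm hDne))
  have hlt : (symSub n ⊓ LinearMap.ker
      ((Matrix.traceLinearMap (Fin n) ℝ ℝ).comp (LinearMap.mulRight ℝ D))) < symSub n :=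
    lt_of_le_of_ne inf_le_left (fun hc => hDnot (by rw [hc]; exact hDsymm))
  have hfr1 := Submodule.finrank_mono hspan
  have hfr2 := Submodule.finrank_lt_finrank_of_lt hlt
  have hvert := hX.2
  rw [Fintype.card_fin] at hvert
  have hle := finrank_symSub_le n
  omega
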